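/- arXiv:2303.15285 — 4 statements merged into one kernel-verified Lean document; each statement's English description precedes it below -/
import Mathlib

section
/- If a set A ⊆ ℕ is creative, then every recursively enumerable set B many-one reduces to A: there exists a computable function f : ℕ → ℕ such that for all n, n ∈ B if and only if f(n) ∈ A. -/
/-- The `i`-th recursively enumerable set in the standard numbering. -/
def Wre (i : ℕ) : Set ℕ := {x | ((Denumerable.ofNat Nat.Partrec.Code i).eval x).Dom}

/-- `A` is productive. -/
def Productive (A : Set ℕ) : Prop :=
  ∃ f : ℕ → ℕ, Computable f ∧ ∀ i : ℕ, Wre i ⊆ A → f i ∈ A \ Wre i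

/-- `A` is creative: `A` is r.e. and its complement is productive. -/
def Creative (A : Set ℕ) : Prop := REPred (· ∈ A) ∧ Productive Aᶜ

open Nat.Partrec (Code)
open Nat.Partrec.Code

private def nz (z : ℕ) : ℕ := z.unpair.2.unpair.1
private def xz (z : ℕ) : ℕ := z.unpair.2.unpair.2

private def vz (p : ℕ → ℕ) (z : ℕ) : ℕ :=
  p (Encodable.encode (curry (curry (Denumerable.ofNat Code z.unpair.1) z.unpair.1) (nz z)))

private def oz (p : ℕ → ℕ) (z : ℕ) : Option ℕ := if xz z = vz p z then some 0 else none

private def Gfun (B : Set ℕ) (p : ℕ → ℕ) : ℕ →. ℕ := fun z =>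
  (Part.assert (nz z ∈ B) fun _ => Part.some ()).bind fun _ => (oz p z : Part ℕ)

private lemma nz_comp : Computable nz :=
  (Primrec.fst.comp (Primrec.unpair.comp (Primrec.snd.comp Primrec.unpair))).to_comp

private lemma xz_comp : Computable xz :=
  (Primrec.snd.comp (Primrec.unpair.comp (Primrec.snd.comp Primrec.unpair))).to_comp

private lemma vz_comp {p : ℕ → ℕ} (hp : Computable p) : Computable (vz p) := by
  have hi : Primrec fun z : ℕ => z.unpair.1 := Primrec.fst.comp Primrec.unpair
  refine hp.comp (Primrec.encode.comp ?_).to_comp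
  exact primrec₂_curry.comp
    (primrec₂_curry.comp ((Primrec.ofNat Code).comp hi) hi)
    (Primrec.fst.comp (Primrec.unpair.comp (Primrec.snd.comp Primrec.unpair)))

private lemma oz_comp {p : ℕ → ℕ} (hp : Computable p) : Computable (oz p) := by
  have he : Computable₂ fun (a b : ℕ) => decide (a = b) := Primrec.eq.decide.to_comp
  have hd : Computable fun z => decide (xz z = vz p z) := he.comp xz_comp (vz_comp hp)
  have := Computable.cond hd (Computable.const (some 0)) (Computable.const (none : Option ℕ))
  exact this.of_eq fun z => by by_cases hh : xz z = vz p z <;> simp [oz, hh]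

private lemma Gfun_partrec {B : Set ℕ} (hB : REPred (· ∈ B)) {p : ℕ → ℕ} (hp : Computable p) :
    Partrec (Gfun B p) := by
  refine Partrec.bind (Partrec.comp hB nz_comp) ?_
  exact (Computable.ofOption ((oz_comp hp).comp Computable.fst)).to₂

private lemma dom_aux (P : Prop) (o : Option ℕ) :
    ((Part.assert P fun _ => Part.some ()).bind fun _ => (o : Part ℕ)).Dom ↔ P ∧ o.isSome := by
  simp [Part.bind, Part.assert, Part.ofOption_dom]

/-- Every r.e. set many-one reduces to a creative set. -/
theorem creative_many_one_complete (A : Set ℕ) (h : Creative A)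
    (B : Set ℕ) (hB : REPred (· ∈ B)) :
    ∃ f : ℕ → ℕ, Computable f ∧ ∀ n, n ∈ B ↔ f n ∈ A := by
  obtain ⟨_, p, hp, hprod⟩ := h
  obtain ⟨c, hc⟩ := exists_code.1 (Partrec.nat_iff.1 (Gfun_partrec hB hp))
  set i₀ : ℕ := Encodable.encode c with hi₀
  refine ⟨fun n => p (Encodable.encode (curry (curry c i₀) n)), ?_, fun n => ?_⟩
  · refine hp.comp (Primrec.encode.comp ?_).to_comp
    exact primrec₂_curry.comp (Primrec.const (curry c i₀)) Primrec.id
  set f : ℕ → ℕ := fun n => p (Encodable.encode (curry (curry c i₀) n)) with hf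
  have hW : Wre (Encodable.encode (curry (curry c i₀) n)) = {x | n ∈ B ∧ x = f n} := by
    ext x
    simp only [Wre, Set.mem_setOf_eq, Denumerable.ofNat_encode, eval_curry, hc]
    show (Gfun B p (Nat.pair i₀ (Nat.pair n x))).Dom ↔ _
    have h1 : nz (Nat.pair i₀ (Nat.pair n x)) = n := by simp [nz]
    have h2 : xz (Nat.pair i₀ (Nat.pair n x)) = x := by simp [xz]
    have h3 : vz p (Nat.pair i₀ (Nat.pair n x)) = f n := by
      simp [vz, nz, hf, hi₀, Denumerable.ofNat_encode]
    rw [Gfun, dom_aux, h1]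
    have ho : oz p (Nat.pair i₀ (Nat.pair n x)) = if x = f n then some 0 else none := by
      simp only [oz, h2, h3]
    rw [ho]
    by_cases hx : x = f n <;> simp [hx]
  constructor
  · intro hn
    by_contra hfa
    have hsub : Wre (Encodable.encode (curry (curry c i₀) n)) ⊆ Aᶜ := by
      rw [hW]; rintro x ⟨-, rfl⟩; exact hfa
    have := hprod _ hsub
    exact this.2 (by rw [hW]; exact ⟨hn, rfl⟩)
  · intro hfa
    by_contra hn
    have hsub : Wre (Encodable.encode (curry (curry c i₀) n)) ⊆ Aᶜ := by
      rw [hW]; rintro x ⟨hn', -⟩; exact absurd hn' hn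
    exact (hprod _ hsub).1 hfa
end

section
/- If (A,B) is a disjoint pair of c.e. sets and every disjoint pair of c.e. sets is semi-reducible to (A,B), then (A,B) is effectively inseparable. -/
open Nat.Partrec (Code)
open Nat.Partrec.Code

/-- x appears in W_i within k steps -/
def fnd (i x k : ℕ) : Bool := (evaln k (Denumerable.ofNat Code i) x).isSome

lemma mem_Wre_iff {i x : ℕ} :
    x ∈ {x | ((Denumerable.ofNat Code i).eval x).Dom} ↔ ∃ k, fnd i x k = true := by
  simp only [Set.mem_setOf_eq, Part.dom_iff_mem, fnd, Option.isSome_iff_exists]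
  constructor
  · rintro ⟨y, hy⟩
    obtain ⟨k, hk⟩ := evaln_complete.1 hy
    exact ⟨k, y, hk⟩
  · rintro ⟨k, y, hy⟩
    exact ⟨y, evaln_sound hy⟩

def rf (x : ℕ) : Part ℕ :=
  Nat.rfind fun k => Part.some (fnd x.unpair.1 x k || fnd x.unpair.2 x k)

def gC (x : ℕ) : Part ℕ :=
  (rf x).bind fun k => Nat.rfind fun _ => Part.some (fnd x.unpair.2 x k && !fnd x.unpair.1 x k)

def gD (x : ℕ) : Part ℕ :=
  (rf x).bind fun k => Nat.rfind fun _ => Part.some (fnd x.unpair.1 x k)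

lemma const_rfind_dom {b : Bool} : (Nat.rfind fun _ => Part.some b).Dom ↔ b = true := by
  constructor
  · intro h
    have := Nat.rfind_spec (Part.get_mem h)
    simpa using this
  · rintro rfl
    exact Nat.rfind_dom.2 ⟨0, by simp, fun _ => trivial⟩

lemma gC_dom_iff {x : ℕ} :
    (gC x).Dom ↔ ∃ k ∈ rf x, fnd x.unpair.2 x k = true ∧ fnd x.unpair.1 x k = false := by
  simp only [gC, Part.bind_dom]
  constructor
  · rintro ⟨h, hk⟩
    refine ⟨(rf x).get h, Part.get_mem h, ?_⟩
    have := const_rfind_dom.1 hk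
    simpa using this
  · rintro ⟨k, hk, h1, h2⟩
    have hd : (rf x).Dom := Part.dom_iff_mem.2 ⟨k, hk⟩
    refine ⟨hd, ?_⟩
    have : (rf x).get hd = k := Part.get_eq_of_mem hk hd
    rw [this]
    exact const_rfind_dom.2 (by simp [h1, h2])

lemma gD_dom_iff {x : ℕ} :
    (gD x).Dom ↔ ∃ k ∈ rf x, fnd x.unpair.1 x k = true := by
  simp only [gD, Part.bind_dom]
  constructor
  · rintro ⟨h, hk⟩
    exact ⟨(rf x).get h, Part.get_mem h, const_rfind_dom.1 hk⟩
  · rintro ⟨k, hk, h1⟩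
    have hd : (rf x).Dom := Part.dom_iff_mem.2 ⟨k, hk⟩
    refine ⟨hd, ?_⟩
    have : (rf x).get hd = k := Part.get_eq_of_mem hk hd
    rw [this]
    exact const_rfind_dom.2 h1

def Cset : Set ℕ := {x | (gC x).Dom}
def Dset : Set ℕ := {x | (gD x).Dom}

lemma CD_disjoint : Cset ∩ Dset = ∅ := by
  ext x
  simp only [Set.mem_inter_iff, Set.mem_empty_iff_false, iff_false]
  rintro ⟨hC, hD⟩
  obtain ⟨k1, hk1, hc1, hc2⟩ := gC_dom_iff.1 hC
  obtain ⟨k2, hk2, hd⟩ := gD_dom_iff.1 hD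
  have : k1 = k2 := Part.mem_unique hk1 hk2
  rw [this, hd] at hc2
  exact Bool.false_ne_true hc2.symm

lemma fnd_primrec {g : ℕ → ℕ} (hg : Primrec g) :
    Primrec₂ fun x k : ℕ => fnd (g x) x k :=
  Primrec.option_isSome.comp
    (primrec_evaln.comp ((Primrec.snd.pair ((Primrec.ofNat Code).comp (hg.comp Primrec.fst))).pair
      Primrec.fst))

lemma rf_partrec : Partrec rf :=
  Partrec.rfind ((Primrec.dom_bool₂ _).comp₂
    ((fnd_primrec (Primrec.fst.comp Primrec.unpair)) : Primrec₂ _)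
    (fnd_primrec (Primrec.snd.comp Primrec.unpair))).to_comp.partrec₂

lemma gC_partrec : Partrec gC :=
  rf_partrec.bind <| Partrec.rfind <|
    ((Primrec₂.comp₂ (Primrec.dom_bool₂ (· && ·))
      ((fnd_primrec (Primrec.snd.comp Primrec.unpair)).comp
        (Primrec.fst.comp Primrec.fst) (Primrec.snd.comp Primrec.fst) : Primrec _)
      (Primrec.not.comp₂ ((fnd_primrec (Primrec.fst.comp Primrec.unpair)).comp
        (Primrec.fst.comp Primrec.fst) (Primrec.snd.comp Primrec.fst) : Primrec _)))
      : Primrec₂ fun (p : ℕ × ℕ) (_ : ℕ) =>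
         fnd p.1.unpair.2 p.1 p.2 && !fnd p.1.unpair.1 p.1 p.2).to_comp.partrec₂

lemma gD_partrec : Partrec gD :=
  rf_partrec.bind <| Partrec.rfind <|
    (((fnd_primrec (Primrec.fst.comp Primrec.unpair)).comp
      (Primrec.fst.comp Primrec.fst) (Primrec.snd.comp Primrec.fst) : Primrec _).to₂
      : Primrec₂ fun (p : ℕ × ℕ) (_ : ℕ) => fnd p.1.unpair.1 p.1 p.2).to_comp.partrec₂


lemma rf_dom {n : ℕ} (hn : (∃ k, fnd n.unpair.1 n k = true) ∨ (∃ k, fnd n.unpair.2 n k = true)) :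
    (rf n).Dom := by
  apply Nat.rfind_dom.2
  obtain ⟨k, hk⟩ | ⟨k, hk⟩ := hn
  · exact ⟨k, by simp [hk], fun _ => trivial⟩
  · exact ⟨k, by simp [hk], fun _ => trivial⟩

lemma dichotomy {n : ℕ}
    (hn : (∃ k, fnd n.unpair.1 n k = true) ∨ (∃ k, fnd n.unpair.2 n k = true)) :
    n ∈ Cset ∨ n ∈ Dset := by
  have hd := rf_dom hn
  set k0 := (rf n).get hd with hk0
  have hmem : k0 ∈ rf n := Part.get_mem hd
  have hspec0 := Nat.rfind_spec hmem
  rw [Part.mem_some_iff] at hspec0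
  have hspec : fnd n.unpair.1 n k0 = true ∨ fnd n.unpair.2 n k0 = true := by
    have := hspec0.symm
    rwa [Bool.or_eq_true] at this
  by_cases h1 : fnd n.unpair.1 n k0 = true
  · exact Or.inr (gD_dom_iff.2 ⟨k0, hmem, h1⟩)
  · have h2 : fnd n.unpair.2 n k0 = true := hspec.resolve_left h1
    exact Or.inl (gC_dom_iff.2 ⟨k0, hmem, h2, by simpa using h1⟩)

lemma Cset_sub {n : ℕ} (h : n ∈ Cset) : ∃ k, fnd n.unpair.2 n k = true := by
  obtain ⟨k, _, h2, _⟩ := gC_dom_iff.1 h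
  exact ⟨k, h2⟩

lemma Dset_sub {n : ℕ} (h : n ∈ Dset) : ∃ k, fnd n.unpair.1 n k = true := by
  obtain ⟨k, _, h1⟩ := gD_dom_iff.1 h
  exact ⟨k, h1⟩

/-- A disjoint pair `(A, B)` is effectively inseparable. -/
def EIPair (A B : Set ℕ) : Prop :=
  ∃ t : ℕ → ℕ → ℕ, Computable₂ t ∧
    ∀ i j : ℕ, A ⊆ Wre i → B ⊆ Wre j → Wre i ∩ Wre j = ∅ → t i j ∉ Wre i ∪ Wre j

lemma mem_Wre_iff' {i x : ℕ} : x ∈ Wre i ↔ ∃ k, fnd i x k = true := mem_Wre_iff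

/-- If every disjoint pair of c.e. sets is semi-reducible to `(A, B)`, then
`(A, B)` is effectively inseparable. -/
theorem semi_complete_pair_is_ei (A B : Set ℕ)
    (hA : REPred (· ∈ A)) (hB : REPred (· ∈ B)) (hAB : A ∩ B = ∅)
    (h : ∀ C D : Set ℕ, REPred (· ∈ C) → REPred (· ∈ D) → C ∩ D = ∅ →
      ∃ f : ℕ → ℕ, Computable f ∧ (∀ x ∈ C, f x ∈ A) ∧ (∀ x ∈ D, f x ∈ B)) :
    EIPair A B := by
  obtain ⟨f, hf, hfC, hfD⟩ := h Cset Dset gC_partrec.dom_re gD_partrec.dom_re CD_disjoint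
  obtain ⟨cf, hcf⟩ := Nat.Partrec.Code.exists_code.1 (Partrec.nat_iff.1 hf)
  set pre : ℕ → ℕ := fun i => Encodable.encode ((Denumerable.ofNat Code i).comp cf) with hpre
  have hpre_prim : Primrec pre :=
    Primrec.encode.comp (primrec₂_comp.comp (Primrec.ofNat Code) (Primrec.const cf))
  have hWpre : ∀ i x : ℕ, x ∈ Wre (pre i) ↔ f x ∈ Wre i := by
    intro i x
    simp only [Wre, Set.mem_setOf_eq, hpre, Denumerable.ofNat_encode, eval]
    have : eval cf x = Part.some (f x) := by rw [hcf]; rfl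
    rw [this]
    exact ⟨fun ⟨_, h⟩ => h, fun h => ⟨trivial, h⟩⟩
  refine ⟨fun i j => f (Nat.pair (pre i) (pre j)), ?_, ?_⟩
  · exact hf.comp ((Primrec₂.natPair.comp (hpre_prim.comp Primrec.fst)
      (hpre_prim.comp Primrec.snd)).to_comp)
  · intro i j hAi hBj hdisj hmem
    set n := Nat.pair (pre i) (pre j) with hn
    have hu1 : n.unpair.1 = pre i := by simp [hn]
    have hu2 : n.unpair.2 = pre j := by simp [hn]
    have hnmem : (∃ k, fnd n.unpair.1 n k = true) ∨ (∃ k, fnd n.unpair.2 n k = true) := by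
      cases hmem with
      | inl hm =>
        exact Or.inl (by rw [hu1]; exact mem_Wre_iff'.1 ((hWpre i n).2 hm))
      | inr hm =>
        exact Or.inr (by rw [hu2]; exact mem_Wre_iff'.1 ((hWpre j n).2 hm))
    have hfn : f n ∈ Wre i ∩ Wre j := by
      cases dichotomy hnmem with
      | inl hC =>
        have h1 : f n ∈ A := hfC n hC
        have h2 : n ∈ Wre (pre j) := by
          rw [← hu2]; exact mem_Wre_iff'.2 (Cset_sub hC)
        exact ⟨hAi h1, (hWpre j n).1 h2⟩
      | inr hD =>
        have h1 : f n ∈ B := hfD n hD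
        have h2 : n ∈ Wre (pre i) := by
          rw [← hu1]; exact mem_Wre_iff'.2 (Dset_sub hD)
        exact ⟨(hWpre i n).1 h2, hBj h1⟩
    rw [hdisj] at hfn
    exact hfn
end

section
/- If both components of an effectively inseparable pair are considered, then each component is creative; i.e., if (A,B) is an effectively inseparable disjoint pair of c.e. sets, then A is creative (and by symmetry so is B). -/
theorem aux_index_of_re {A : Set ℕ} (hA : REPred (· ∈ A)) : ∃ a : ℕ, Wre a = A := by
  have h1 : Partrec fun x => (Part.assert (x ∈ A) fun _ => Part.some ()).map fun _ => (0 : ℕ) :=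
    hA.map ((Computable.const 0).comp Computable.fst).to₂
  obtain ⟨c, hc⟩ := Nat.Partrec.Code.exists_code.1 (Partrec.nat_iff.1 h1)
  refine ⟨Encodable.encode c, ?_⟩
  ext x
  simp [Wre, hc, Part.assert]

/-- Each component of an effectively inseparable disjoint pair of c.e. sets is
creative. -/
theorem ei_pair_first_component_creative (A B : Set ℕ)
    (hA : REPred (· ∈ A)) (hB : REPred (· ∈ B)) (hAB : A ∩ B = ∅)
    (hEI : EIPair A B) : Creative A := by
  obtain ⟨a, ha⟩ := aux_index_of_re hA
  obtain ⟨t, hT, hEIt⟩ := hEI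
  -- partial function whose domain (on pair i x) is Wre i ∪ B
  have hf1 : Partrec fun n : ℕ =>
      (Denumerable.ofNat Nat.Partrec.Code n.unpair.1).eval n.unpair.2 :=
    Nat.Partrec.Code.eval_part.comp
      ((Computable.ofNat _).comp (Computable.fst.comp Computable.unpair))
      (Computable.snd.comp Computable.unpair)
  have hf2 : Partrec fun n : ℕ =>
      (Part.assert (n.unpair.2 ∈ B) fun _ => Part.some ()).map fun _ => (0 : ℕ) :=
    (hB.comp (Computable.snd.comp Computable.unpair)).map
      ((Computable.const 0).comp Computable.fst).to₂
  obtain ⟨k, hk, hkspec⟩ := Partrec.merge' hf1 hf2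
  obtain ⟨cU, hcU⟩ := Nat.Partrec.Code.exists_code.1 (Partrec.nat_iff.1 hk)
  obtain ⟨S, hS, hSspec⟩ := Nat.Partrec.Code.smn
  -- the index function for Wre i ∪ B
  set g : ℕ → ℕ := fun i => Encodable.encode (S cU i) with hg
  have hgcomp : Computable g :=
    Computable.encode.comp (hS.comp (Computable.const cU) Computable.id)
  have hWg : ∀ i x, x ∈ Wre (g i) ↔ x ∈ Wre i ∨ x ∈ B := by
    intro i x
    have : Wre (g i) x ↔ (k (Nat.pair i x)).Dom := by
      simp only [Wre, hg, Set.mem_setOf_eq, Denumerable.ofNat_encode, hSspec, hcU]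
      exact Iff.rfl
    rw [show x ∈ Wre (g i) ↔ Wre (g i) x from Iff.rfl, this, (hkspec (Nat.pair i x)).2]
    simp [Wre, Part.assert]
  refine ⟨hA, fun i => t a (g i), hT.comp (Computable.const a) hgcomp, ?_⟩
  intro i hi
  have h1 : A ⊆ Wre a := by rw [ha]
  have h2 : B ⊆ Wre (g i) := fun x hx => (hWg i x).2 (Or.inr hx)
  have h3 : Wre a ∩ Wre (g i) = ∅ := by
    ext x
    simp only [Set.mem_inter_iff, Set.mem_empty_iff_false, iff_false, not_and]
    intro hxa hxg
    rcases (hWg i x).1 hxg with h | h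
    · exact hi h (ha ▸ hxa)
    · exact Set.eq_empty_iff_forall_notMem.1 hAB x ⟨ha ▸ hxa, h⟩
  have := hEIt a (g i) h1 h2 h3
  constructor
  · intro hmem
    exact this (Or.inl (h1 hmem))
  · intro hmem
    exact this (Or.inr ((hWg i _).2 (Or.inl hmem)))
end

section
/- In any consistent first-order extension S (in the same language) of the theory Succ⁻ of a successor function, a subset X ⊆ ℕ is weakly representable in S if and only if X is finite or cofinite. -/
open FirstOrder Language

/-- Functions of the language of a successor: a constant `0` and a unary `S`. -/
inductive SuccFn : ℕ → Type
  | zero : SuccFn 0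
  | succ : SuccFn 1

/-- The first-order language with a constant `0` and a unary function `S`. -/
def succLang : Language := ⟨SuccFn, fun _ => Empty⟩

def zeroC : succLang.Constants := SuccFn.zero
def succF : succLang.Functions 1 := SuccFn.succ

/-- The numeral `n̄ = Sⁿ0`. -/
def numeral : ℕ → succLang.Term Empty
  | 0 => zeroC.term
  | n + 1 => succF.apply₁ (numeral n)

/-- S1 : S is injective. -/
def axS1 : succLang.Sentence :=
  BoundedFormula.all (BoundedFormula.all
    ((Term.bdEqual (succF.apply₁ (&0)) (succF.apply₁ (&1))).imp (Term.bdEqual (&0) (&1))))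

/-- S2 : `S x ≠ 0`. -/
def axS2 : succLang.Sentence :=
  BoundedFormula.all (BoundedFormula.not (Term.bdEqual (succF.apply₁ (&0)) zeroC.term))

/-- S3 : every nonzero element is a successor. -/
def axS3 : succLang.Sentence :=
  BoundedFormula.all ((BoundedFormula.not (Term.bdEqual (&0) zeroC.term)).imp
    (BoundedFormula.ex (Term.bdEqual (&0) (succF.apply₁ (&1)))))

/-- The theory `Succ⁻`. -/
def SuccMinus : succLang.Theory := {axS1, axS2, axS3}

/-- `X ⊆ ℕ` is weakly representable in `T`. -/
def WeaklyRep (T : succLang.Theory) (X : Set ℕ) : Prop :=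
  ∃ φ : succLang.Formula (Fin 1),
    ∀ n : ℕ, n ∈ X ↔ T ⊨ᵇ (φ.subst fun _ => numeral n)

/-! ### Auxiliary development -/

namespace SuccAux

open FirstOrder.Language.Structure

section Basic

variable {M : Type*} [succLang.Structure M]

/-- The interpretation of `0`. -/
def zM : M := Structure.funMap (L := succLang) zeroC default

/-- The interpretation of `S`. -/
def sM (x : M) : M := Structure.funMap (L := succLang) succF ![x]

lemma funMap_zero (x : Fin 0 → M) : Structure.funMap (L := succLang) zeroC x = zM := by
  unfold zM; congr; exact Subsingleton.elim _ _

lemma funMap_succ (x : Fin 1 → M) : Structure.funMap (L := succLang) succF x = sM (x 0) := by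
  unfold sM; congr; funext i; fin_cases i; rfl

lemma realize_numeral (n : ℕ) (v : Empty → M) : (numeral n).realize v = sM^[n] zM := by
  induction n with
  | zero => simp only [numeral, Term.realize_constants, Function.iterate_zero, id]
            exact funMap_zero _
  | succ n ih => simp only [numeral, Term.realize_functions_apply₁, ih,
      Function.iterate_succ_apply']
                 exact funMap_succ _

lemma s_inj (h : M ⊨ axS1) : Function.Injective (sM : M → M) := by
  intro x y hxy
  simp [axS1, Sentence.Realize, Formula.Realize, Fin.snoc] at h
  exact h x y hxy

lemma s_ne_z (h : M ⊨ axS2) (x : M) : sM x ≠ zM := by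
  simp [axS2, Sentence.Realize, Formula.Realize, Fin.snoc] at h
  exact h x

lemma exists_pred (h : M ⊨ axS3) (x : M) (hx : x ≠ zM) : ∃ y : M, x = sM y := by
  simp [axS3, Sentence.Realize, Formula.Realize, Fin.snoc] at h
  exact h x hx

lemma numeral_inj (h1 : M ⊨ axS1) (h2 : M ⊨ axS2) :
    ∀ {n m : ℕ}, (sM^[n] zM : M) = sM^[m] zM → n = m := by
  intro n
  induction n with
  | zero =>
    intro m hm
    cases m with
    | zero => rfl
    | succ m =>
      rw [Function.iterate_succ_apply'] at hm
      exact absurd hm.symm (s_ne_z h2 _)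
  | succ n ih =>
    intro m hm
    cases m with
    | zero =>
      rw [Function.iterate_succ_apply'] at hm
      exact absurd hm (s_ne_z h2 _)
    | succ m =>
      rw [Function.iterate_succ_apply', Function.iterate_succ_apply'] at hm
      rw [ih (s_inj h1 hm)]

end Basic

/-! ### The automorphism moving a nonstandard element -/

section Auto

variable {M : Type*} [succLang.Structure M]

/-- Two elements are connected if they have a common iterated successor. -/
def Conn (x y : M) : Prop := ∃ k l : ℕ, (sM^[k] x : M) = sM^[l] y

lemma conn_refl (x : M) : Conn x x := ⟨0, 0, rfl⟩

lemma conn_symm {x y : M} (h : Conn x y) : Conn y x := by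
  obtain ⟨k, l, hkl⟩ := h; exact ⟨l, k, hkl.symm⟩

lemma iter_comm (k l : ℕ) (x : M) : (sM^[k] (sM^[l] x) : M) = sM^[l] (sM^[k] x) := by
  rw [← Function.iterate_add_apply, ← Function.iterate_add_apply, Nat.add_comm]

lemma conn_trans {x y z : M} (h : Conn x y) (h' : Conn y z) : Conn x z := by
  obtain ⟨k, l, hkl⟩ := h
  obtain ⟨m, n, hmn⟩ := h'
  refine ⟨m + k, l + n, ?_⟩
  calc (sM^[m + k] x : M) = sM^[m] (sM^[k] x) := Function.iterate_add_apply _ _ _ _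
    _ = sM^[m] (sM^[l] y) := by rw [hkl]
    _ = sM^[l] (sM^[m] y) := iter_comm _ _ _
    _ = sM^[l] (sM^[n] z) := by rw [hmn]
    _ = sM^[l + n] z := (Function.iterate_add_apply _ _ _ _).symm

lemma conn_s_self (x : M) : Conn x (sM x) := ⟨1, 0, rfl⟩

variable (h1 : M ⊨ axS1) (h2 : M ⊨ axS2) (h3 : M ⊨ axS3)
variable {c : M} (hc : ∀ m : ℕ, c ≠ sM^[m] zM)

include h1 h2 hc in
lemma not_conn_z_c : ¬ Conn (zM : M) c := by
  rintro ⟨k, l, hkl⟩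
  rcases le_or_gt l k with hlk | hkl'
  · have : (sM^[l] (sM^[k - l] zM) : M) = sM^[l] c := by
      rw [← Function.iterate_add_apply, Nat.add_sub_cancel' hlk]; exact hkl
    exact hc (k - l) (((s_inj h1).iterate l) this).symm
  · have hk : k + (l - k) = l := by omega
    have : (sM^[k] zM : M) = sM^[k] (sM^[l - k] c) := by
      rw [← Function.iterate_add_apply, hk]; exact hkl
    have hz : (zM : M) = sM^[l - k] c := (s_inj h1).iterate k this
    obtain ⟨j, hj⟩ : ∃ j, l - k = j + 1 := ⟨l - k - 1, by omega⟩
    rw [hj, Function.iterate_succ_apply'] at hz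
    exact s_ne_z h2 _ hz.symm

open scoped Classical in
/-- The map shifting the connected component of `c` by one. -/
noncomputable def sigma (c : M) (x : M) : M := if Conn x c then sM x else x

omit [succLang.Structure M] in
lemma empty_rel_elim {n : ℕ} (r : succLang.Relations n) : False := r.elim

lemma sigma_s (c a : M) : sigma c (sM a) = sM (sigma c a) := by
  by_cases hconn : Conn a c
  · have h' : Conn (sM a) c := conn_trans (conn_symm (conn_s_self a)) hconn
    rw [sigma, sigma, if_pos hconn, if_pos h']
  · have h' : ¬ Conn (sM a) c := fun hh => hconn (conn_trans (conn_s_self a) hh)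
    rw [sigma, sigma, if_neg hconn, if_neg h']

include h1 h2 h3 hc in
lemma sigma_bij : Function.Bijective (sigma c : M → M) := by
  constructor
  · intro x y hxy
    unfold sigma at hxy
    by_cases hx : Conn x c <;> by_cases hy : Conn y c
    · rw [if_pos hx, if_pos hy] at hxy; exact s_inj h1 hxy
    · rw [if_pos hx, if_neg hy] at hxy
      exact absurd (hxy ▸ conn_trans (conn_symm (conn_s_self x)) hx) hy
    · rw [if_neg hx, if_pos hy] at hxy
      exact absurd (by rw [hxy]; exact conn_trans (conn_symm (conn_s_self y)) hy) hx
    · rwa [if_neg hx, if_neg hy] at hxy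
  · intro y
    by_cases hy : Conn y c
    · have hyz : y ≠ zM := by
        rintro rfl; exact not_conn_z_c h1 h2 hc hy
      obtain ⟨x, hx⟩ := exists_pred h3 y hyz
      have hxc : Conn x c := conn_trans (hx ▸ conn_s_self x) hy
      exact ⟨x, by rw [sigma, if_pos hxc, hx]⟩
    · exact ⟨y, by rw [sigma, if_neg hy]⟩

include h1 h2 h3 hc in
lemma exists_autEquiv : ∃ g : M ≃[succLang] M, g c = sM c := by
  refine ⟨{ toEquiv := Equiv.ofBijective _ (sigma_bij h1 h2 h3 hc),
            map_fun' := ?_, map_rel' := fun r _ => (empty_rel_elim r).elim }, ?_⟩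
  · intro n f x
    cases f
    · show sigma c (funMap zeroC x) = funMap zeroC _
      rw [funMap_zero, funMap_zero, sigma, if_neg (not_conn_z_c h1 h2 hc)]
    · show sigma c (funMap succF x) = funMap succF _
      rw [funMap_succ, funMap_succ, sigma_s]
      rfl
  · show sigma c c = sM c
    rw [sigma, if_pos (conn_refl c)]

end Auto

/-! ### Formulas for the backward direction -/

/-- The formula `x = m̄`. -/
def eqNum (m : ℕ) : succLang.Formula (Fin 1) :=
  Term.equal (Term.var 0) ((numeral m).relabel Empty.elim)

/-- The disjunction `⋁_{m ∈ l} x = m̄`. -/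
def bigOr (l : List ℕ) : succLang.Formula (Fin 1) :=
  (l.map eqNum).foldr (· ⊔ ·) ⊥

section RealizeLemmas

variable {M : Type*} [succLang.Structure M]

lemma realize_eqNum (m : ℕ) (v : Fin 1 → M) :
    (eqNum m).Realize v ↔ v 0 = sM^[m] zM := by
  simp only [eqNum, Formula.realize_equal, Term.realize_var, Term.realize_relabel,
    realize_numeral]

lemma realize_bigOr_subst (l : List ℕ) (n : ℕ) (v : Empty → M) (xs : Fin 0 → M) :
    ((bigOr l).subst fun _ => numeral n).Realize v xs ↔
      ∃ m ∈ l, (sM^[n] zM : M) = sM^[m] zM := by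
  obtain rfl : xs = default := Subsingleton.elim _ _
  rw [BoundedFormula.realize_subst, bigOr, BoundedFormula.realize_foldr_sup]
  constructor
  · rintro ⟨ψ, hψ, hre⟩
    obtain ⟨m, hm, rfl⟩ := List.mem_map.1 hψ
    refine ⟨m, hm, ?_⟩
    have := (realize_eqNum m _).1 hre
    rwa [realize_numeral] at this
  · rintro ⟨m, hm, hEq⟩
    refine ⟨eqNum m, List.mem_map.2 ⟨m, hm, rfl⟩, (realize_eqNum m _).2 ?_⟩
    rwa [realize_numeral]

end RealizeLemmas

end SuccAux

open SuccAux in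
/-- In any consistent extension of `Succ⁻`, a set is weakly representable iff it is finite or cofinite. -/
theorem weaklyRep_iff_finite_or_cofinite (S : succLang.Theory) (h : S.IsSatisfiable) (hext : SuccMinus ⊆ S)
  (X : Set ℕ) : WeaklyRep S X ↔ (X.Finite ∨ Xᶜ.Finite) := by
  have hax1 : ∀ (M : Type) [succLang.Structure M] [M ⊨ S] [Nonempty M], M ⊨ axS1 :=
    fun M _ _ _ => Theory.realize_sentence_of_mem S (hext (by simp [SuccMinus]))
  have hax2 : ∀ (M : Type) [succLang.Structure M] [M ⊨ S] [Nonempty M], M ⊨ axS2 :=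
    fun M _ _ _ => Theory.realize_sentence_of_mem S (hext (by simp [SuccMinus]))
  have hax3 : ∀ (M : Type) [succLang.Structure M] [M ⊨ S] [Nonempty M], M ⊨ axS3 :=
    fun M _ _ _ => Theory.realize_sentence_of_mem S (hext (by simp [SuccMinus]))
  constructor
  · -- forward direction
    rintro ⟨φ, hφ⟩
    by_contra hcon
    push_neg at hcon
    obtain ⟨hXinf, hXcinf⟩ := hcon
    -- the boundary of X is unbounded
    have hbound : ∀ N : ℕ, ∃ n, N ≤ n ∧ n ∈ X ∧ n + 1 ∉ X := by
      classical
      intro N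
      obtain ⟨a, haX, haN⟩ : ∃ a, a ∈ X ∧ N ≤ a := by
        by_contra hcon'
        push_neg at hcon'
        exact hXinf ((Set.finite_Iio N).subset fun x hx => hcon' x hx)
      obtain ⟨b, hbX, hab⟩ : ∃ b, b ∉ X ∧ a ≤ b := by
        by_contra hcon'
        push_neg at hcon'
        exact hXcinf ((Set.finite_Iio a).subset fun x hx => (hcon' x hx))
      have hex : ∃ j, a + j ∉ X := ⟨b - a, by rwa [Nat.add_sub_cancel' hab]⟩
      have hk := Nat.find_spec hex
      have hkpos : 0 < Nat.find hex := by
        rcases Nat.eq_zero_or_pos (Nat.find hex) with h0 | h0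
        · rw [h0] at hk; simp at hk; exact absurd haX hk
        · exact h0
      have hk1 := Nat.find_min hex (show Nat.find hex - 1 < Nat.find hex by omega)
      rw [not_not] at hk1
      refine ⟨a + (Nat.find hex - 1), by omega, hk1, ?_⟩
      rw [show a + (Nat.find hex - 1) + 1 = a + Nat.find hex from by omega]
      exact hk
    have hBinf : {n | n ∈ X ∧ n + 1 ∉ X}.Infinite := by
      apply Set.infinite_of_not_bddAbove
      rintro ⟨N, hN⟩
      obtain ⟨n, hn1, hn2, hn3⟩ := hbound (N + 1)
      have := hN (Set.mem_setOf_eq ▸ ⟨hn2, hn3⟩ : n ∈ {n | n ∈ X ∧ n + 1 ∉ X})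
      omega
    let e : ℕ ↪ {n | n ∈ X ∧ n + 1 ∉ X} := hBinf.natEmbedding
    set g : ℕ → ℕ := fun k => (e k : ℕ) with hg_def
    have hgX : ∀ k, g k ∈ X ∧ g k + 1 ∉ X := fun k => (e k).2
    have hginj : Function.Injective g :=
      fun a b hab => e.injective (Subtype.ext hab)
    -- choose counterexample models
    have hcnt : ∀ k : ℕ, ∃ (Mk : S.ModelType) (v : Empty → Mk) (xs : Fin 0 → Mk),
        ¬ (φ.subst fun _ => numeral (g k + 1)).Realize v xs := by
      intro k
      have hnot : ¬ (S ⊨ᵇ φ.subst fun _ => numeral (g k + 1)) :=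
        fun hh => (hgX k).2 ((hφ _).2 hh)
      unfold Theory.ModelsBoundedFormula at hnot
      push_neg at hnot
      exact hnot
    choose Mk vk xsk hMk using hcnt
    -- the ultraproduct
    let u : Ultrafilter ℕ := Filter.hyperfilter ℕ
    let Mf : ℕ → Type := fun k => (Mk k).Carrier
    let MU := (u : Filter ℕ).Product Mf
    haveI hMUmod : MU ⊨ S :=
      ⟨fun ψ hψ => (Ultraproduct.sentence_realize ψ).2
        (Filter.Eventually.of_forall fun k => Theory.realize_sentence_of_mem S hψ)⟩
    haveI : Nonempty MU := inferInstance
    let cs : ∀ k, Mf k := fun k => sM^[g k] zM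
    -- Claim A : φ holds at c
    have claimA : φ.Realize (fun i : Fin 1 => ((fun _ => cs : Fin 1 → ∀ k, Mf k) i : MU)) := by
      rw [Ultraproduct.realize_formula_cast]
      apply Filter.Eventually.of_forall
      intro k
      have hmod : S ⊨ᵇ φ.subst fun _ => numeral (g k) := (hφ _).1 (hgX k).1
      have h2 := BoundedFormula.realize_subst.1
        (hmod.realize_formula (Mf k) (v := fun e : Empty => e.elim))
      have heq : (fun a : Fin 1 => (numeral (g k)).realize (fun e : Empty => e.elim)) =
          fun _ : Fin 1 => cs k := by
        funext a; rw [realize_numeral]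
      rw [heq] at h2
      exact h2
    -- Claim B : φ fails at S c
    have claimB : ¬ φ.Realize
        (fun i : Fin 1 => ((fun _ => (fun k => sM (cs k)) : Fin 1 → ∀ k, Mf k) i : MU)) := by
      rw [Ultraproduct.realize_formula_cast]
      intro hev
      obtain ⟨k, hk⟩ := hev.exists
      apply hMk k
      rw [BoundedFormula.realize_subst]
      have heq : (fun a : Fin 1 => (numeral (g k + 1)).realize (vk k)) =
          fun _ : Fin 1 => sM (cs k) := by
        funext a; rw [realize_numeral, Function.iterate_succ_apply']
      rw [heq, show xsk k = default from Subsingleton.elim _ _]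
      exact hk
    -- c is not a numeral
    have hcnum : ∀ m : ℕ, ((cs : MU)) ≠ sM^[m] zM := by
      intro m hEq
      have hne' : ¬ (eqNum m).Realize (fun i : Fin 1 => ((fun _ => cs : Fin 1 → ∀ k, Mf k) i : MU)) := by
        rw [Ultraproduct.realize_formula_cast]
        intro hev
        have hg : ∀ᶠ k in (u : Filter ℕ), g k = m :=
          hev.mono fun k hk =>
            numeral_inj (hax1 (Mf k)) (hax2 (Mf k)) ((realize_eqNum m _).1 hk)
        have hfin : {k | g k = m}.Finite :=
          Set.Subsingleton.finite fun a ha b hb => hginj (ha.trans hb.symm)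
        exact Set.Finite.notMem_hyperfilter hfin hg
      exact hne' ((realize_eqNum m _).2 hEq)
    -- the automorphism
    obtain ⟨gE, hgE⟩ := exists_autEquiv (hax1 MU) (hax2 MU) (hax3 MU) hcnum
    have h3 : φ.Realize (fun _ : Fin 1 => gE ((cs : MU))) :=
      StrongHomClass.realize_formula gE φ (v := fun _ : Fin 1 => ((cs : MU))) |>.2 claimA
    rw [hgE] at h3
    have hscomm : (sM ((cs : MU))) = ((fun k => sM (cs k) : ∀ k, Mf k) : MU) := by
      show Structure.funMap (L := succLang) succF ![((cs : MU))] = _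
      erw [show (![((cs : MU))] : Fin 1 → MU) =
          fun i : Fin 1 => ((fun _ => cs : Fin 1 → ∀ k, Mf k) i : MU) from
        funext fun i => by fin_cases i; rfl]
      rw [Ultraproduct.funMap_cast]
      congr 1
      funext k
      exact funMap_succ _
    erw [hscomm] at h3
    exact claimB h3
  · -- backward direction
    rintro (hf | hf)
    · -- X finite
      refine ⟨bigOr hf.toFinset.toList, fun n => ⟨fun hn => ?_, fun hn => ?_⟩⟩
      · intro M0 v xs
        rw [realize_bigOr_subst]
        exact ⟨n, by simp [hn], rfl⟩
      · obtain ⟨M0⟩ := h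
        have hre := hn M0 (fun e => e.elim) default
        rw [realize_bigOr_subst] at hre
        obtain ⟨m, hm, hEq⟩ := hre
        obtain rfl : n = m := numeral_inj (hax1 M0.Carrier) (hax2 M0.Carrier) hEq
        simpa using hm
    · -- X cofinite
      refine ⟨(bigOr hf.toFinset.toList).not, fun n => ⟨fun hn => ?_, fun hn => ?_⟩⟩
      · intro M0 v xs
        rw [show ((bigOr hf.toFinset.toList).not.subst fun _ => numeral n) =
            ((bigOr hf.toFinset.toList).subst fun _ => numeral n).not from rfl,
          BoundedFormula.realize_not, realize_bigOr_subst]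
        rintro ⟨m, hm, hEq⟩
        obtain rfl : n = m := numeral_inj (hax1 M0.Carrier) (hax2 M0.Carrier) hEq
        simp at hm
        exact hm hn
      · obtain ⟨M0⟩ := h
        by_contra hnX
        have hre := hn M0 (fun e => e.elim) default
        rw [show ((bigOr hf.toFinset.toList).not.subst fun _ => numeral n) =
            ((bigOr hf.toFinset.toList).subst fun _ => numeral n).not from rfl,
          BoundedFormula.realize_not, realize_bigOr_subst] at hre
        exact hre ⟨n, by simp [hnX], rfl⟩
end
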